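/- For every integer n ≥ 1, if W satisfies the minimal constraints and W·ln W and the powers W^k for 1 ≤ k ≤ n+1 are integrable, then the Wigner entropy obeys the hierarchy bound S[W] ≥ ln π + ∑_{k=1}^{n} (1/k) · ∫ W(q,p) · (1 − π·W(q,p))^k dq dp, where every summand on the right-hand side is nonnegative. -/

import Mathlib

open Real MeasureTheory Finset

lemma log_partial_sum (n : ℕ) {x : ℝ} (hx : 0 < x) (hx1 : x ≤ 1) :
    ∑ k ∈ Finset.Icc 1 n, (1 - x) ^ k / k ≤ -Real.log x := by
  set y := 1 - x with hy
  have hy0 : 0 ≤ y := by simp [hy]; linarith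
  have habs : |y| < 1 := by rw [abs_of_nonneg hy0]; simp [hy]; linarith
  have hsum := Real.hasSum_pow_div_log_of_abs_lt_one habs
  have h1 : (1 : ℝ) - y = x := by simp [hy]
  rw [h1] at hsum
  have hle := sum_le_hasSum (Finset.range n) (fun i _ => by positivity) hsum
  calc ∑ k ∈ Finset.Icc 1 n, y ^ k / k
      = ∑ i ∈ Finset.range (n + 1 - 1), y ^ (1 + i) / ((1 + i : ℕ) : ℝ) := by
        rw [← Finset.Ico_add_one_right_eq_Icc, Finset.sum_Ico_eq_sum_range]
    _ = ∑ i ∈ Finset.range n, y ^ (1 + i) / ((1 + i : ℕ) : ℝ) := by simp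
    _ = ∑ i ∈ Finset.range n, y ^ (i + 1) / (i + 1) := by
        apply Finset.sum_congr rfl; intro i _; push_cast; ring_nf
    _ ≤ -Real.log x := hle

/-- For every integer `n ≥ 1`, if `W` satisfies the minimal constraints and `W·ln W` and the
powers `W^k` for `1 ≤ k ≤ n+1` are integrable, then the Wigner entropy obeys the hierarchy bound
`S[W] ≥ ln π + ∑_{k=1}^{n} (1/k) ∫ W (1 − π W)^k`, where every summand on the right-hand side
is nonnegative. -/
theorem wigner_entropy_hierarchy (n : ℕ) (hn : 1 ≤ n)
    (W : ℝ × ℝ → ℝ) (hmeas : Measurable W)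
    (hpos : ∀ z, 0 ≤ W z)
    (hnorm : ∫ z, W z = 1)
    (hbound : ∀ z, Real.pi * W z ≤ 1)
    (hlog : Integrable (fun z => W z * Real.log (W z)))
    (hpow : ∀ k : ℕ, 1 ≤ k → k ≤ n + 1 → Integrable (fun z => (W z) ^ k)) :
    (-∫ z, W z * Real.log (W z))
      ≥ Real.log Real.pi
        + ∑ k ∈ Finset.Icc 1 n, (1 / (k : ℝ)) * ∫ z, W z * (1 - Real.pi * W z) ^ k
    ∧ ∀ k ∈ Finset.Icc 1 n,
        0 ≤ (1 / (k : ℝ)) * ∫ z, W z * (1 - Real.pi * W z) ^ k := by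
  have hW : Integrable W := by
    have := hpow 1 le_rfl (by omega); simpa using this
  -- integrability of each g_k
  have hgk : ∀ k : ℕ, Integrable (fun z => W z * (1 - Real.pi * W z) ^ k) := by
    intro k
    have hm : Measurable (fun z => W z * (1 - Real.pi * W z) ^ k) :=
      hmeas.mul ((measurable_const.sub (measurable_const.mul hmeas)).pow_const k)
    refine hW.mono' hm.aestronglyMeasurable (ae_of_all _ fun z => ?_)
    have h0 : 0 ≤ 1 - Real.pi * W z := by linarith [hbound z]
    have h1 : 1 - Real.pi * W z ≤ 1 := by
      have := mul_nonneg Real.pi_pos.le (hpos z); linarith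
    have : |(1 - Real.pi * W z) ^ k| ≤ 1 := by
      rw [abs_pow, abs_of_nonneg h0]
      exact pow_le_one₀ h0 h1
    calc ‖W z * (1 - Real.pi * W z) ^ k‖ = W z * |(1 - Real.pi * W z) ^ k| := by
          rw [Real.norm_eq_abs, abs_mul, abs_of_nonneg (hpos z)]
      _ ≤ W z * 1 := by gcongr; exact hpos z
      _ = W z := mul_one _
  -- nonnegativity of each integrand
  have hgk_nonneg : ∀ k : ℕ, ∀ z, 0 ≤ W z * (1 - Real.pi * W z) ^ k := by
    intro k z
    have h0 : 0 ≤ 1 - Real.pi * W z := by linarith [hbound z]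
    exact mul_nonneg (hpos z) (pow_nonneg h0 k)
  have hterm : ∀ k ∈ Finset.Icc 1 n,
      0 ≤ (1 / (k : ℝ)) * ∫ z, W z * (1 - Real.pi * W z) ^ k := by
    intro k hk
    exact mul_nonneg (by positivity) (integral_nonneg (hgk_nonneg k))
  refine ⟨?_, hterm⟩
  -- the RHS integrand
  set F : ℝ × ℝ → ℝ := fun z => -(W z * Real.log Real.pi + W z * Real.log (W z)) with hF
  have hFeq : ∀ z, F z = W z * (-Real.log (Real.pi * W z)) := by
    intro z
    rcases eq_or_lt_of_le (hpos z) with h | h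
    · simp [hF, ← h]
    · rw [hF, Real.log_mul Real.pi_ne_zero h.ne']; ring
  have hFint : Integrable F := ((hW.mul_const _).add hlog).neg
  -- pointwise inequality
  have hpt : ∀ z, ∑ k ∈ Finset.Icc 1 n,
      (1 / (k : ℝ)) * (W z * (1 - Real.pi * W z) ^ k) ≤ F z := by
    intro z
    rw [hFeq z]
    rcases eq_or_lt_of_le (hpos z) with h | h
    · simp [← h]
    · have hx : 0 < Real.pi * W z := mul_pos Real.pi_pos h
      have hlog := log_partial_sum n hx (hbound z)
      calc ∑ k ∈ Finset.Icc 1 n, (1 / (k : ℝ)) * (W z * (1 - Real.pi * W z) ^ k)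
          = W z * ∑ k ∈ Finset.Icc 1 n, (1 - Real.pi * W z) ^ k / k := by
            rw [Finset.mul_sum]; apply Finset.sum_congr rfl; intro k _; ring
        _ ≤ W z * (-Real.log (Real.pi * W z)) := by
            exact mul_le_mul_of_nonneg_left hlog (hpos z)
  -- integrate
  have hsum_int : Integrable (fun z => ∑ k ∈ Finset.Icc 1 n,
      (1 / (k : ℝ)) * (W z * (1 - Real.pi * W z) ^ k)) := by
    apply integrable_finset_sum
    intro k _
    exact (hgk k).const_mul _
  have hmono : ∫ z, (∑ k ∈ Finset.Icc 1 n,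
      (1 / (k : ℝ)) * (W z * (1 - Real.pi * W z) ^ k)) ≤ ∫ z, F z :=
    integral_mono hsum_int hFint hpt
  have hL : ∫ z, (∑ k ∈ Finset.Icc 1 n,
      (1 / (k : ℝ)) * (W z * (1 - Real.pi * W z) ^ k))
      = ∑ k ∈ Finset.Icc 1 n, (1 / (k : ℝ)) * ∫ z, W z * (1 - Real.pi * W z) ^ k := by
    rw [integral_finset_sum _ (fun k _ => (hgk k).const_mul _)]
    exact Finset.sum_congr rfl fun k _ => MeasureTheory.integral_const_mul _ _
  have hR : ∫ z, F z = -(Real.log Real.pi + ∫ z, W z * Real.log (W z)) := by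
    rw [hF, integral_neg, integral_add (hW.mul_const _) hlog, integral_mul_const, hnorm,
      one_mul]
  rw [hL, hR] at hmono
  linarith
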